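/- Symmetric atomic deduction modulo a rewrite relation R has the cut elimination property: every sequent Γ ⊢ Δ provable in symmetric atomic deduction modulo R has a cut-free proof, i.e., a proof not using the Cut rule (indeed, a proof consisting of a single application of the Axiom rule). -/
import Mathlib


open Relation

/--
Symmetric atomic deduction modulo a rewrite relation `R` on atomic propositions `α`.
Sequents are pairs of finite multisets of atomic propositions; `≡` is the
reflexive-symmetric-transitive closure `Relation.EqvGen R` of `R`.
The Boolean index records whether the Cut rule is allowed:
`SymDed R true Γ Δ` is provability in the full system, `SymDed R false Γ Δ`
is provability by a cut-free proof.
-/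
inductive SymDed (R : α → α → Prop) : Bool → Multiset α → Multiset α → Prop
  | ax {b : Bool} (Γ Δ : Multiset α) (A B : α)
      (h : EqvGen R A B) :
      SymDed R b (A ::ₘ Γ) (B ::ₘ Δ)
  | cut (Γ Δ : Multiset α) (C₁ C₂ : α)
      (h : EqvGen R C₁ C₂)
      (p₁ : SymDed R true Γ (C₁ ::ₘ Δ)) (p₂ : SymDed R true (C₂ ::ₘ Γ) Δ) :
      SymDed R true Γ Δ
  | contrL {b : Bool} (Γ Δ : Multiset α) (A A₁ A₂ : α)
      (h₁ : EqvGen R A A₁) (h₂ : EqvGen R A A₂)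
      (p : SymDed R b (A₁ ::ₘ A₂ ::ₘ Γ) Δ) :
      SymDed R b (A ::ₘ Γ) Δ
  | contrR {b : Bool} (Γ Δ : Multiset α) (A A₁ A₂ : α)
      (h₁ : EqvGen R A A₁) (h₂ : EqvGen R A A₂)
      (p : SymDed R b Γ (A₁ ::ₘ A₂ ::ₘ Δ)) :
      SymDed R b Γ (A ::ₘ Δ)
  | weakL {b : Bool} (Γ Δ : Multiset α) (A : α)
      (p : SymDed R b Γ Δ) :
      SymDed R b (A ::ₘ Γ) Δ
  | weakR {b : Bool} (Γ Δ : Multiset α) (A : α)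
      (p : SymDed R b Γ Δ) :
      SymDed R b Γ (A ::ₘ Δ)

lemma symDed_sem {α : Type*} {R : α → α → Prop} {b : Bool} {Γ Δ : Multiset α}
    (h : SymDed R b Γ Δ) : ∃ A ∈ Γ, ∃ B ∈ Δ, EqvGen R A B := by
  induction h with
  | ax Γ Δ A B h =>
      exact ⟨A, Multiset.mem_cons_self _ _, B, Multiset.mem_cons_self _ _, h⟩
  | cut Γ Δ C₁ C₂ h p₁ p₂ ih₁ ih₂ =>
      obtain ⟨A, hA, B, hB, hAB⟩ := ih₁
      rcases Multiset.mem_cons.mp hB with hB | hB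
      · obtain ⟨A', hA', B', hB', hAB'⟩ := ih₂
        rcases Multiset.mem_cons.mp hA' with hA' | hA'
        · exact ⟨A, hA, B', hB', ((hAB.trans _ _ _ (hB ▸ h)).trans _ _ _ (hA' ▸ hAB'))⟩
        · exact ⟨A', hA', B', hB', hAB'⟩
      · exact ⟨A, hA, B, hB, hAB⟩
  | contrL Γ Δ A A₁ A₂ h₁ h₂ p ih =>
      obtain ⟨X, hX, Y, hY, hXY⟩ := ih
      rcases Multiset.mem_cons.mp hX with hX | hX
      · exact ⟨A, Multiset.mem_cons_self _ _, Y, hY, h₁.trans _ _ _ (hX ▸ hXY)⟩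
      · rcases Multiset.mem_cons.mp hX with hX | hX
        · exact ⟨A, Multiset.mem_cons_self _ _, Y, hY, h₂.trans _ _ _ (hX ▸ hXY)⟩
        · exact ⟨X, Multiset.mem_cons_of_mem hX, Y, hY, hXY⟩
  | contrR Γ Δ A A₁ A₂ h₁ h₂ p ih =>
      obtain ⟨X, hX, Y, hY, hXY⟩ := ih
      rcases Multiset.mem_cons.mp hY with hY | hY
      · exact ⟨X, hX, A, Multiset.mem_cons_self _ _, hXY.trans _ _ _ ((hY ▸ h₁).symm _ _)⟩
      · rcases Multiset.mem_cons.mp hY with hY | hY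
        · exact ⟨X, hX, A, Multiset.mem_cons_self _ _, hXY.trans _ _ _ ((hY ▸ h₂).symm _ _)⟩
        · exact ⟨X, hX, Y, Multiset.mem_cons_of_mem hY, hXY⟩
  | weakL Γ Δ A p ih =>
      obtain ⟨X, hX, Y, hY, hXY⟩ := ih
      exact ⟨X, Multiset.mem_cons_of_mem hX, Y, hY, hXY⟩
  | weakR Γ Δ A p ih =>
      obtain ⟨X, hX, Y, hY, hXY⟩ := ih
      exact ⟨X, hX, Y, Multiset.mem_cons_of_mem hY, hXY⟩

/--
Symmetric atomic deduction modulo `R` has the cut elimination property: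
every sequent provable in symmetric atomic deduction modulo `R` has a cut-free
proof (a proof not using the Cut rule).
-/
theorem symDed_cut_elimination {α : Type*} (R : α → α → Prop) (Γ Δ : Multiset α)
    (h : SymDed R true Γ Δ) : SymDed R false Γ Δ := by
  obtain ⟨A, hA, B, hB, hAB⟩ := symDed_sem h
  obtain ⟨Γ', rfl⟩ := Multiset.exists_cons_of_mem hA
  obtain ⟨Δ', rfl⟩ := Multiset.exists_cons_of_mem hB
  exact SymDed.ax _ _ _ _ hAB
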